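/- Let H be a complex Hilbert space, let P be a bounded self-adjoint operator on H, let |P| denote the positive square root of P², and let T and S be bounded operators on H satisfying T* P = P S. Then T* |P| T ≤ ‖T‖ ‖S‖ · |P| in the Loewner order. -/

import Mathlib

set_option maxHeartbeats 1000000

noncomputable section

open ContinuousLinearMap
open scoped ComplexOrder

section Aux

open scoped InnerProductSpace

variable {H : Type*} [NormedAddCommGroup H] [InnerProductSpace ℂ H] [CompleteSpace H]


lemma sa_inner' {A : H →L[ℂ] H} (hA : IsSelfAdjoint A) (u v : H) :
    ⟪A u, v⟫_ℂ = ⟪u, A v⟫_ℂ := by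
  conv_lhs => rw [← hA.adjoint_eq]
  exact adjoint_inner_left A v u

lemma normsq_eq' {A : H →L[ℂ] H} (hA : IsSelfAdjoint A) (z : H) :
    (⟪(A * A) z, z⟫_ℂ).re = ‖A z‖^2 := by
  rw [ContinuousLinearMap.mul_apply, sa_inner' hA (A z) z, inner_self_eq_norm_sq_to_K]
  norm_cast

lemma re_le_prod (u v : H) : (⟪u, v⟫_ℂ).re ≤ ‖u‖ * ‖v‖ :=
  le_trans (le_trans (Complex.re_le_norm _) le_rfl)
    (norm_inner_le_norm u v)



lemma aux_seq (g : ℕ → ℝ) (k M : ℝ) (hg : ∀ m, 0 ≤ g m) (hk : 0 ≤ k) (hM : 0 ≤ M)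
    (hlog : ∀ m, g (m+1)^2 ≤ g m * g (m+2)) (hbound : ∀ m, g m ≤ M * k ^ m)
    (hg0 : 0 < g 0) : g 1 ≤ k * g 0 := by
  by_contra hcon
  push_neg at hcon
  have hK : ∀ m, g 1 * g m ≤ g 0 * g (m+1) := by
    intro m; induction m with
    | zero => nlinarith [hg 1, hg 0]
    | succ n ih =>
      rcases eq_or_lt_of_le (hg (n+1)) with h0 | hpos
      · nlinarith [hg 1, hg 0, hg (n+2)]
      · have h2 := hlog n
        nlinarith [hg 1, hg 0, hg (n+2), hg n]
  have hA : ∀ m, g 1 ^ (m+1) ≤ g 0 ^ m * g (m+1) := by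
    intro m; induction m with
    | zero => simpa using le_refl (g 1)
    | succ n ih =>
      have h1 : (0:ℝ) ≤ g 0 ^ n := pow_nonneg hg0.le n
      calc g 1 ^ (n+2) = g 1 ^ (n+1) * g 1 := by ring
        _ ≤ (g 0 ^ n * g (n+1)) * g 1 := mul_le_mul_of_nonneg_right ih (hg 1)
        _ = g 0 ^ n * (g 1 * g (n+1)) := by ring
        _ ≤ g 0 ^ n * (g 0 * g (n+2)) := mul_le_mul_of_nonneg_left (hK (n+1)) h1
        _ = g 0 ^ (n+1) * g (n+2) := by ring
  have hg1 : 0 < g 1 := lt_of_le_of_lt (by positivity) hcon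
  rcases eq_or_lt_of_le hk with hk0 | hkpos
  · have h1 := hbound 1
    rw [← hk0] at h1
    simp at h1
    linarith
  · set q := g 1 / (k * g 0) with hq
    have hq1 : 1 < q := (one_lt_div (by positivity)).2 hcon
    obtain ⟨m, hm⟩ := pow_unbounded_of_one_lt (M / g 0) hq1
    have hub : q ^ (m+1) ≤ M / g 0 := by
      rw [hq, div_pow, div_le_div_iff₀ (by positivity) hg0]
      calc g 1 ^ (m+1) * g 0 ≤ (g 0 ^ m * g (m+1)) * g 0 :=
            mul_le_mul_of_nonneg_right (hA m) hg0.le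
        _ ≤ (g 0 ^ m * (M * k ^ (m+1))) * g 0 := by
            have h2 := mul_le_mul_of_nonneg_left (hbound (m+1)) (pow_nonneg hg0.le m)
            nlinarith [hg0.le]
        _ = M * (k * g 0) ^ (m+1) := by rw [mul_pow]; ring
    have hmono : q ^ m ≤ q ^ (m+1) := pow_le_pow_right₀ hq1.le (Nat.le_succ m)
    linarith

lemma eps_core (P Q T S : H →L[ℂ] H) (hP : IsSelfAdjoint P) (hQsa : IsSelfAdjoint Q)
    (hQpos : ∀ z : H, 0 ≤ (inner ℂ (Q z) z : ℂ))
    (hsq : Q * Q = P * P) (hTS : adjoint T * P = P * S) (x : H) (hx : x ≠ 0)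
    (ε : ℝ) (hε : 0 < ε) :
    (⟪Q (T x), T x⟫_ℂ).re ≤ ‖S‖ * ‖T‖ * ((⟪Q x, x⟫_ℂ).re + Real.sqrt ε * ‖x‖^2) := by
  -- spectrum of Q is nonnegative
  have hQP : Q.IsPositive := by
    refine ⟨hQsa.isSymmetric, fun z => ?_⟩
    have h := hQpos z
    rw [Complex.le_def] at h
    simpa [ContinuousLinearMap.reApplyInnerSelf] using h.1
  have hspec : ∀ t ∈ spectrum ℝ Q, 0 ≤ t := by
    have h1 := hQP.spectrumRestricts
    rw [SpectrumRestricts.nnreal_iff] at h1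
    exact h1
  -- norms through P
  have hPz : ∀ w, ‖P w‖ = ‖Q w‖ := by
    intro w
    have h1 := normsq_eq' hP w
    have h2 := normsq_eq' hQsa w
    rw [hsq] at h2
    nlinarith [norm_nonneg (P w), norm_nonneg (Q w)]
  have hPT : P * T = adjoint S * P := by
    have h := congrArg (fun A => ContinuousLinearMap.adjoint A) hTS
    rw [show (adjoint T * P) = adjoint T ∘L P from rfl, show (P * S) = P ∘L S from rfl,
      adjoint_comp, adjoint_comp, adjoint_adjoint, hP.adjoint_eq] at h
    exact h
  have F5 : ∀ z, ‖Q (T z)‖ ≤ ‖S‖ * ‖Q z‖ := by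
    intro z
    have h3 : P (T z) = adjoint S (P z) := by
      have := congrFun (congrArg DFunLike.coe hPT) z
      simpa [ContinuousLinearMap.mul_apply] using this
    calc ‖Q (T z)‖ = ‖P (T z)‖ := (hPz (T z)).symm
      _ = ‖adjoint S (P z)‖ := by rw [h3]
      _ ≤ ‖adjoint S‖ * ‖P z‖ := le_opNorm _ _
      _ = ‖S‖ * ‖Q z‖ := by rw [hPz z, show adjoint S = star S from rfl, norm_star]
  -- CFC operators
  have hf_pos : ∀ t : ℝ, 0 < Real.sqrt (t^2 + ε) := fun t => Real.sqrt_pos.2 (by positivity)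
  have hf_cont : Continuous (fun t : ℝ => Real.sqrt (t^2 + ε)) :=
    Real.continuous_sqrt.comp (by continuity)
  have hfi_cont : Continuous (fun t : ℝ => (Real.sqrt (t^2 + ε))⁻¹) :=
    hf_cont.inv₀ (fun t => (hf_pos t).ne')
  have hr_cont : Continuous (fun t : ℝ => Real.sqrt (Real.sqrt (t^2 + ε))) :=
    Real.continuous_sqrt.comp hf_cont
  have hri_cont : Continuous (fun t : ℝ => (Real.sqrt (Real.sqrt (t^2 + ε)))⁻¹) :=
    hr_cont.inv₀ (fun t => (Real.sqrt_pos.2 (hf_pos t)).ne')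
  set Qe := cfc (fun t : ℝ => Real.sqrt (t^2 + ε)) Q with hQe
  set Qi := cfc (fun t : ℝ => (Real.sqrt (t^2 + ε))⁻¹) Q with hQi
  set Re := cfc (fun t : ℝ => Real.sqrt (Real.sqrt (t^2 + ε))) Q with hRe
  set Ri := cfc (fun t : ℝ => (Real.sqrt (Real.sqrt (t^2 + ε)))⁻¹) Q with hRi
  have hQe_sa : IsSelfAdjoint Qe := cfc_predicate _ Q
  have hRe_sa : IsSelfAdjoint Re := cfc_predicate _ Q
  have hQeQi : Qe * Qi = 1 := by
    rw [hQe, hQi, ← cfc_mul _ _ Q hf_cont.continuousOn hfi_cont.continuousOn]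
    calc cfc (fun t : ℝ => Real.sqrt (t^2+ε) * (Real.sqrt (t^2+ε))⁻¹) Q
        = cfc (fun _ : ℝ => (1:ℝ)) Q := by
          apply cfc_congr; intro t _; exact mul_inv_cancel₀ (hf_pos t).ne'
      _ = 1 := cfc_const_one ℝ Q
  have hQiQe : Qi * Qe = 1 := by
    rw [hQe, hQi, ← cfc_mul _ _ Q hfi_cont.continuousOn hf_cont.continuousOn]
    calc cfc (fun t : ℝ => (Real.sqrt (t^2+ε))⁻¹ * Real.sqrt (t^2+ε)) Q
        = cfc (fun _ : ℝ => (1:ℝ)) Q := by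
          apply cfc_congr; intro t _; exact inv_mul_cancel₀ (hf_pos t).ne'
      _ = 1 := cfc_const_one ℝ Q
  have hReRe : Re * Re = Qe := by
    rw [hQe, hRe, ← cfc_mul _ _ Q hr_cont.continuousOn hr_cont.continuousOn]
    apply cfc_congr; intro t _
    exact Real.mul_self_sqrt (Real.sqrt_nonneg _)
  have hRiRe : Ri * Re = 1 := by
    rw [hRe, hRi, ← cfc_mul _ _ Q hri_cont.continuousOn hr_cont.continuousOn]
    calc cfc (fun t : ℝ => (Real.sqrt (Real.sqrt (t^2+ε)))⁻¹ * Real.sqrt (Real.sqrt (t^2+ε))) Q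
        = cfc (fun _ : ℝ => (1:ℝ)) Q := by
          apply cfc_congr; intro t _
          exact inv_mul_cancel₀ (Real.sqrt_pos.2 (hf_pos t)).ne'
      _ = 1 := cfc_const_one ℝ Q
  have hQeQe : Qe * Qe = Q * Q + ε • (1 : H →L[ℂ] H) := by
    rw [hQe, ← cfc_mul _ _ Q hf_cont.continuousOn hf_cont.continuousOn]
    calc cfc (fun t : ℝ => Real.sqrt (t^2+ε) * Real.sqrt (t^2+ε)) Q
        = cfc (fun t : ℝ => t * t + ε) Q := by
          apply cfc_congr; intro t _
          show Real.sqrt (t^2+ε) * Real.sqrt (t^2+ε) = t * t + ε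
          rw [Real.mul_self_sqrt (by positivity)]; ring
      _ = Q * Q + ε • 1 := by
          rw [cfc_add (a := Q) (fun t : ℝ => t * t) (fun _ : ℝ => ε) (by fun_prop) (by fun_prop),
            cfc_mul _ _ Q (by fun_prop) (by fun_prop), cfc_id' ℝ Q, cfc_const ε Q,
            Algebra.algebraMap_eq_smul_one]
  -- F6
  have hsmul_app : ∀ (r : ℝ) (z : H), (r • (1 : H →L[ℂ] H)) z = r • z := by
    intro r z; rw [ContinuousLinearMap.smul_apply, ContinuousLinearMap.one_apply]
  have hre_smul : ∀ (r : ℝ) (z : H), (⟪r • z, z⟫_ℂ).re = r * ‖z‖^2 := by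
    intro r z
    rw [show (r : ℝ) • z = ((r : ℂ)) • z by rw [← algebraMap_smul ℂ r z]; rfl]
    have hz : (⟪z, z⟫_ℂ) = ((‖z‖^2 : ℝ) : ℂ) := by
      rw [inner_self_eq_norm_sq_to_K]; norm_cast
    rw [inner_smul_left, hz, Complex.conj_ofReal, ← Complex.ofReal_mul, Complex.ofReal_re]
  have F6 : ∀ z, ‖Q z‖ ≤ ‖Qe z‖ := by
    intro z
    have h1 := normsq_eq' hQe_sa z
    rw [hQeQe] at h1
    have h2 : (⟪(Q * Q) z + (ε • (1 : H →L[ℂ] H)) z, z⟫_ℂ).re = ‖Q z‖^2 + ε * ‖z‖^2 := by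
      rw [inner_add_left, Complex.add_re, normsq_eq' hQsa z, hsmul_app, hre_smul]
    rw [add_apply] at h1
    rw [h2] at h1
    nlinarith [norm_nonneg (Q z), norm_nonneg (Qe z), sq_nonneg ‖z‖, mul_nonneg hε.le (sq_nonneg ‖z‖)]
  -- W and C
  set W := (Q * T) * Qi with hW
  have hWQe : W * Qe = Q * T := by rw [hW, mul_assoc, hQiQe, mul_one]
  have hWnorm : ‖W‖ ≤ ‖S‖ := by
    apply opNorm_le_bound _ (norm_nonneg S)
    intro y
    have h1 : W y = Q (T (Qi y)) := by simp [hW, ContinuousLinearMap.mul_apply]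
    have h2 : Qe (Qi y) = y := by
      have := congrFun (congrArg DFunLike.coe hQeQi) y
      simpa [ContinuousLinearMap.mul_apply] using this
    calc ‖W y‖ = ‖Q (T (Qi y))‖ := by rw [h1]
      _ ≤ ‖S‖ * ‖Q (Qi y)‖ := F5 _
      _ ≤ ‖S‖ * ‖Qe (Qi y)‖ := mul_le_mul_of_nonneg_left (F6 _) (norm_nonneg S)
      _ = ‖S‖ * ‖y‖ := by rw [h2]
  set C := adjoint W * T with hC
  have hCnorm : ‖C‖ ≤ ‖S‖ * ‖T‖ := by
    calc ‖C‖ ≤ ‖adjoint W‖ * ‖T‖ := norm_mul_le _ _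
      _ = ‖W‖ * ‖T‖ := by rw [show adjoint W = star W from rfl, norm_star]
      _ ≤ ‖S‖ * ‖T‖ := mul_le_mul_of_nonneg_right hWnorm (norm_nonneg T)
  have hQeC : Qe * C = adjoint T * (Q * T) := by
    have h1 : Qe * adjoint W = adjoint T * Q := by
      have h0 := congrArg (fun A => ContinuousLinearMap.adjoint A) hWQe
      rw [show W * Qe = W ∘L Qe from rfl, show Q * T = Q ∘L T from rfl,
        adjoint_comp, adjoint_comp, hQe_sa.adjoint_eq, hQsa.adjoint_eq] at h0
      exact h0
    rw [hC, ← mul_assoc, h1, mul_assoc]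
  have hkey : ∀ u v : H, ⟪Qe (C u), v⟫_ℂ = ⟪Re u, Re (C v)⟫_ℂ := by
    intro u v
    calc ⟪Qe (C u), v⟫_ℂ = ⟪(Qe * C) u, v⟫_ℂ := rfl
      _ = ⟪(adjoint T * (Q * T)) u, v⟫_ℂ := by rw [hQeC]
      _ = ⟪(Q * T) u, T v⟫_ℂ := adjoint_inner_left T v ((Q * T) u)
      _ = ⟪(W * Qe) u, T v⟫_ℂ := by rw [hWQe]
      _ = ⟪Qe u, adjoint W (T v)⟫_ℂ := (adjoint_inner_right W (Qe u) (T v)).symm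
      _ = ⟪Qe u, C v⟫_ℂ := rfl
      _ = ⟪Re (Re u), C v⟫_ℂ := by
          rw [show Qe u = Re (Re u) from by rw [← hReRe]; rfl]
      _ = ⟪Re u, Re (C v)⟫_ℂ := sa_inner' hRe_sa (Re u) (C v)
  set g : ℕ → ℝ := fun m => ‖Re ((C ^ m) x)‖ with hgdef
  have hgnonneg : ∀ m, 0 ≤ g m := fun m => norm_nonneg _
  have hpow_apply : ∀ (m : ℕ) (z : H), (C ^ (m+1)) z = C ((C ^ m) z) := by
    intro m z; rw [pow_succ']; rfl
  have hgsq : ∀ m, (⟪Qe ((C ^ m) x), (C ^ m) x⟫_ℂ).re = g m ^ 2 := by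
    intro m
    have h := normsq_eq' hRe_sa ((C ^ m) x)
    rw [hReRe] at h
    exact h
  have hlog : ∀ m, g (m+1)^2 ≤ g m * g (m+2) := by
    intro m
    have h1 : (⟪Qe ((C ^ (m+1)) x), (C ^ (m+1)) x⟫_ℂ) = ⟪Re ((C^m) x), Re ((C^(m+2)) x)⟫_ℂ := by
      rw [show (C ^ (m+1)) x = C ((C^m) x) from hpow_apply m x,
        hkey ((C^m) x) (C ((C^m) x)), ← hpow_apply m x, ← hpow_apply (m+1) x]
    have h2 := hgsq (m+1)
    rw [h1] at h2
    calc g (m+1)^2 = (⟪Re ((C^m) x), Re ((C^(m+2)) x)⟫_ℂ).re := h2.symm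
      _ ≤ ‖Re ((C^m) x)‖ * ‖Re ((C^(m+2)) x)‖ := re_le_prod _ _
      _ = g m * g (m+2) := rfl
  have hbound : ∀ m, g m ≤ (‖Re‖ * ‖x‖) * (‖S‖*‖T‖) ^ m := by
    have hCm : ∀ m : ℕ, ‖(C ^ m) x‖ ≤ (‖S‖*‖T‖)^m * ‖x‖ := by
      intro m; induction m with
      | zero => simp
      | succ n ih =>
        rw [hpow_apply n x]
        calc ‖C ((C^n) x)‖ ≤ ‖C‖ * ‖(C^n) x‖ := le_opNorm _ _
          _ ≤ (‖S‖*‖T‖) * ((‖S‖*‖T‖)^n * ‖x‖) :=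
              mul_le_mul hCnorm ih (norm_nonneg _) (by positivity)
          _ = (‖S‖*‖T‖)^(n+1) * ‖x‖ := by ring
    intro m
    calc g m ≤ ‖Re‖ * ‖(C^m) x‖ := le_opNorm _ _
      _ ≤ ‖Re‖ * ((‖S‖*‖T‖)^m * ‖x‖) := mul_le_mul_of_nonneg_left (hCm m) (norm_nonneg _)
      _ = (‖Re‖ * ‖x‖) * (‖S‖*‖T‖)^m := by ring
  have hg00 : g 0 = ‖Re x‖ := by simp [hgdef]
  have hg11 : g 1 = ‖Re (C x)‖ := by simp [hgdef]
  have hg0pos : 0 < g 0 := by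
    have h2 : Ri (Re x) = x := by
      have := congrFun (congrArg DFunLike.coe hRiRe) x
      simpa [ContinuousLinearMap.mul_apply] using this
    have h3 : ‖x‖ ≤ ‖Ri‖ * ‖Re x‖ := by
      conv_lhs => rw [← h2]
      exact le_opNorm _ _
    have hxpos : 0 < ‖x‖ := norm_pos_iff.2 hx
    rw [hg00]
    by_contra hcon
    push_neg at hcon
    have h4 : ‖Re x‖ = 0 := le_antisymm hcon (norm_nonneg _)
    rw [h4, mul_zero] at h3
    linarith
  have hg1 : g 1 ≤ (‖S‖*‖T‖) * g 0 :=
    aux_seq g (‖S‖*‖T‖) (‖Re‖*‖x‖) hgnonneg (by positivity) (by positivity) hlog hbound hg0pos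
  have hstep1 : (⟪Q (T x), T x⟫_ℂ).re ≤ g 0 * g 1 := by
    have e1 : ⟪Q (T x), T x⟫_ℂ = ⟪Re x, Re (C x)⟫_ℂ := by
      have e0 : ⟪Q (T x), T x⟫_ℂ = ⟪Qe (C x), x⟫_ℂ := by
        calc ⟪Q (T x), T x⟫_ℂ = ⟪(Q * T) x, T x⟫_ℂ := rfl
          _ = ⟪(adjoint T * (Q * T)) x, x⟫_ℂ := (adjoint_inner_left T x ((Q*T) x)).symm
          _ = ⟪(Qe * C) x, x⟫_ℂ := by rw [hQeC]
          _ = ⟪Qe (C x), x⟫_ℂ := rfl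
      rw [e0, hkey x x]
    rw [e1, hg00, hg11]
    exact re_le_prod _ _
  have hQex : (⟪Qe x, x⟫_ℂ).re = g 0 ^ 2 := by
    have h := hgsq 0
    simpa using h
  have hvii : (⟪Qe x, x⟫_ℂ).re ≤ (⟪Q x, x⟫_ℂ).re + Real.sqrt ε * ‖x‖^2 := by
    have hd_cont : Continuous (fun t : ℝ => Real.sqrt (t + Real.sqrt ε - Real.sqrt (t^2+ε))) :=
      Real.continuous_sqrt.comp ((continuous_id.add continuous_const).sub hf_cont)
    set D := cfc (fun t : ℝ => Real.sqrt (t + Real.sqrt ε - Real.sqrt (t^2+ε))) Q with hDdef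
    have hD_sa : IsSelfAdjoint D := cfc_predicate _ Q
    have hDD : D * D = Q + Real.sqrt ε • (1 : H →L[ℂ] H) - Qe := by
      rw [hDdef, ← cfc_mul _ _ Q hd_cont.continuousOn hd_cont.continuousOn]
      calc cfc (fun t : ℝ => Real.sqrt (t + Real.sqrt ε - Real.sqrt (t^2+ε)) *
              Real.sqrt (t + Real.sqrt ε - Real.sqrt (t^2+ε))) Q
          = cfc (fun t : ℝ => (t + Real.sqrt ε) - Real.sqrt (t^2+ε)) Q := by
            apply cfc_congr; intro t ht
            have h0 : 0 ≤ t := hspec t ht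
            have h1 : Real.sqrt (t^2+ε) ≤ t + Real.sqrt ε := by
              have hle : t^2 + ε ≤ (t + Real.sqrt ε)^2 := by
                nlinarith [Real.sq_sqrt hε.le, Real.sqrt_nonneg ε]
              calc Real.sqrt (t^2+ε) ≤ Real.sqrt ((t + Real.sqrt ε)^2) := Real.sqrt_le_sqrt hle
                _ = t + Real.sqrt ε := Real.sqrt_sq (by positivity)
            show Real.sqrt _ * Real.sqrt _ = _
            rw [Real.mul_self_sqrt (by linarith)]
        _ = Q + Real.sqrt ε • 1 - Qe := by
            rw [cfc_sub (fun t : ℝ => t + Real.sqrt ε) (fun t : ℝ => Real.sqrt (t^2+ε)) Q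
                (by fun_prop) hf_cont.continuousOn,
              cfc_add (a := Q) (fun t : ℝ => t) (fun _ : ℝ => Real.sqrt ε) (by fun_prop) (by fun_prop),
              cfc_id' ℝ Q, cfc_const _ Q, Algebra.algebraMap_eq_smul_one, hQe]
    have happ : (D * D) x = Q x + Real.sqrt ε • x - Qe x := by
      rw [hDD, sub_apply, add_apply, hsmul_app]
    have h5 : (⟪(D*D) x, x⟫_ℂ).re
        = (⟪Q x,x⟫_ℂ).re + Real.sqrt ε * ‖x‖^2 - (⟪Qe x, x⟫_ℂ).re := by
      rw [happ, inner_sub_left, inner_add_left, Complex.sub_re, Complex.add_re, hre_smul]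
    have h6 : 0 ≤ (⟪(D*D) x, x⟫_ℂ).re := by
      rw [normsq_eq' hD_sa x]; positivity
    linarith
  calc (⟪Q (T x), T x⟫_ℂ).re ≤ g 0 * g 1 := hstep1
    _ ≤ (‖S‖*‖T‖) * g 0 ^2 := by nlinarith [hgnonneg 0, hg1]
    _ = (‖S‖*‖T‖) * (⟪Qe x, x⟫_ℂ).re := by rw [hQex]
    _ ≤ ‖S‖ * ‖T‖ * ((⟪Q x, x⟫_ℂ).re + Real.sqrt ε * ‖x‖^2) :=
        mul_le_mul_of_nonneg_left hvii (by positivity)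

end Aux

/-- The Loewner order on bounded operators: `A ≤ B` iff `⟨(B-A)x, x⟩ ≥ 0` for all `x`. -/
def LoewnerLE {H : Type*} [NormedAddCommGroup H] [InnerProductSpace ℂ H]
    (A B : H →L[ℂ] H) : Prop :=
  ∀ x : H, 0 ≤ (inner ℂ ((B - A) x) x : ℂ)

open scoped InnerProductSpace in
/-- if `P` is bounded self-adjoint, `|P|` is the positive square root of `P²`,
and `T* P = P S`, then `T* |P| T ≤ ‖T‖ ‖S‖ |P|` in the Loewner order. -/
theorem statement12 {H : Type*} [NormedAddCommGroup H] [InnerProductSpace ℂ H]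
    [CompleteSpace H]
    (P absP T S : H →L[ℂ] H)
    (hP : IsSelfAdjoint P)
    (habs_sa : IsSelfAdjoint absP)
    (habs_pos : ∀ x : H, 0 ≤ (inner ℂ (absP x) x : ℂ))
    (habs_sq : absP ∘L absP = P ∘L P)
    (hTS : adjoint T ∘L P = P ∘L S) :
    LoewnerLE (adjoint T ∘L (absP ∘L T)) (((‖T‖ * ‖S‖ : ℝ) : ℂ) • absP) := by
  intro x
  have hkey : (⟪absP (T x), T x⟫_ℂ).re ≤ ‖T‖ * ‖S‖ * (⟪absP x, x⟫_ℂ).re := by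
    by_cases hx : x = 0
    · subst hx
      simp
    · by_contra hcon
      push_neg at hcon
      set δ := ((⟪absP (T x), T x⟫_ℂ).re - ‖T‖ * ‖S‖ * (⟪absP x, x⟫_ℂ).re) with hδ
      have hδpos : 0 < δ := by rw [hδ]; linarith
      set a := ‖T‖ * ‖S‖ * ‖x‖^2 with ha
      have hapos : 0 ≤ a := by positivity
      set ε := (δ / (2 * (a + 1)))^2 with hεdef
      have hεpos : 0 < ε := by positivity
      have hsqrt : Real.sqrt ε = δ / (2 * (a + 1)) := Real.sqrt_sq (by positivity)
      have h1 := eps_core P absP T S hP habs_sa habs_pos habs_sq hTS x hx ε hεpos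
      have h2 : ‖S‖ * ‖T‖ * (Real.sqrt ε * ‖x‖^2) ≤ δ/2 := by
        rw [hsqrt]
        have e1 : ‖S‖ * ‖T‖ * (δ / (2*(a+1)) * ‖x‖^2) = a * (δ / (2*(a+1))) := by
          rw [ha]; ring
        have e2 : (a+1) * (δ / (2*(a+1))) = δ/2 := by
          field_simp
        have e3 : a * (δ / (2*(a+1))) ≤ (a+1) * (δ / (2*(a+1))) :=
          mul_le_mul_of_nonneg_right (by linarith) (by positivity)
        rw [e1]
        linarith
      have hexp : ‖S‖ * ‖T‖ * ((⟪absP x, x⟫_ℂ).re + Real.sqrt ε * ‖x‖^2)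
          = ‖T‖ * ‖S‖ * (⟪absP x, x⟫_ℂ).re + ‖S‖ * ‖T‖ * (Real.sqrt ε * ‖x‖^2) := by ring
      rw [hexp] at h1
      rw [hδ] at hδpos
      linarith
  have h01 := habs_pos x
  have h02 := habs_pos (T x)
  rw [Complex.le_def] at h01 h02
  simp only [Complex.zero_re, Complex.zero_im] at h01 h02
  have e1 : (inner ℂ (((((‖T‖ * ‖S‖ : ℝ) : ℂ) • absP - adjoint T ∘L (absP ∘L T)) x)) x : ℂ)
      = (((‖T‖ * ‖S‖ : ℝ) : ℂ)) * (inner ℂ (absP x) x : ℂ) - (inner ℂ (absP (T x)) (T x) : ℂ) := by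
    rw [ContinuousLinearMap.sub_apply, inner_sub_left, ContinuousLinearMap.smul_apply, inner_smul_left, Complex.conj_ofReal]
    congr 1
    exact adjoint_inner_left T x (absP (T x))
  rw [e1, Complex.le_def]
  constructor
  · simp only [Complex.sub_re, Complex.mul_re, Complex.ofReal_re, Complex.ofReal_im,
      Complex.zero_re]
    rw [← h01.2]
    nlinarith [hkey]
  · simp only [Complex.sub_im, Complex.mul_im, Complex.ofReal_re, Complex.ofReal_im,
      Complex.zero_im]
    rw [← h01.2, ← h02.2]
    ring

end
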